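/- For all integers s ≥ 0 and a ≥ 1, one has Z_s(z_1^a) = Σ_{γ∈I(a,s+a)} z_{γ_1}···z_{γ_a}, where the sum is over all multi-indices γ = (γ_1,...,γ_a) of positive integers with γ_1+...+γ_a = s+a. -/

import Mathlib

open scoped BigOperators

noncomputable section

attribute [local instance 10] Classical.propDecidable

/-- The `q`-integer `[n] = (1 - q^n)/(1 - q)`. -/
def qint (q : ℝ) (n : ℕ) : ℝ := (1 - q ^ n) / (1 - q)

/-- `I(r,n)`: multi-indices of positive integers of depth `r` and weight `n`. -/
def Ifin (r n : ℕ) : Finset (Fin r → ℕ) :=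
  (Fintype.piFinset fun _ : Fin r => Finset.Icc 1 n).filter fun c => (∑ i, c i) = n

/-- `I₀(r,n)`: admissible multi-indices (first entry at least 2). -/
def I0fin (r n : ℕ) : Finset (Fin r → ℕ) :=
  (Ifin r n).filter fun c => ∀ h : 0 < r, 2 ≤ c ⟨0, h⟩

/-- The `q`-analogue of the multiple zeta value,
`ζ_q(α) = Σ_{m_1 > ... > m_r > 0} Π_j q^{(α_j - 1) m_j}/[m_j]^{α_j}`. -/
def zetaQ (q : ℝ) {r : ℕ} (α : Fin r → ℕ) : ℝ :=
  ∑' m : {m : Fin r → ℕ // (∀ i j : Fin r, i < j → m j < m i) ∧ ∀ i, 0 < m i},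
    ∏ j, q ^ ((α j - 1) * m.1 j) / qint q (m.1 j) ^ α j

/-- `K_{b,n}(M) = Σ_{α ∈ I₀(b,n)} Σ_{m_1 > ... > m_{b-1} > m_b = M} Π_j q^{(α_j-1)m_j}/[m_j]^{α_j}`. -/
def Kfun (q : ℝ) (b n M : ℕ) : ℝ :=
  ∑ α ∈ I0fin b n,
    ∑' m : {m : Fin b → ℕ //
        (∀ i j : Fin b, i < j → m j < m i) ∧
          ∀ h : 0 < b, m ⟨b - 1, Nat.sub_lt h Nat.one_pos⟩ = M},
      ∏ j, q ^ ((α j - 1) * m.1 j) / qint q (m.1 j) ^ α j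

/-- `f_ℓ(N,M) = Σ_{N = k_1 > k_2 > ... > k_ℓ > M} (q^{k_1-M}/[k_1-M]) Π_{j=2}^{ℓ} 1/[k_j-M]`. -/
def fS (q : ℝ) (l N M : ℕ) : ℝ :=
  ∑ k ∈ (Fintype.piFinset fun _ : Fin l => Finset.Ioc M N).filter
      (fun k => (∀ i j : Fin l, i < j → k j < k i) ∧ ∀ h : 0 < l, k ⟨0, h⟩ = N),
    ∏ j : Fin l, (if (j : ℕ) = 0 then q ^ (k j - M) else 1) / qint q (k j - M)

/-- `g_{ℓ,β}(M) = Σ_{M = m_1 ≥ m_2 ≥ ... ≥ m_ℓ ≥ 1} (q^{(β-1)m_1}/[m_1]^β) Π_{j=2}^{ℓ} q^{m_j}/[m_j]`. -/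
def gS (q : ℝ) (l β M : ℕ) : ℝ :=
  ∑ m ∈ (Fintype.piFinset fun _ : Fin l => Finset.Icc 1 M).filter
      (fun m => (∀ i j : Fin l, i ≤ j → m j ≤ m i) ∧ ∀ h : 0 < l, m ⟨0, h⟩ = M),
    ∏ j : Fin l, if (j : ℕ) = 0 then q ^ ((β - 1) * m j) / qint q (m j) ^ β
      else q ^ m j / qint q (m j)

/-- `h_{r,ℓ}(N_1,...,N_r,M) = Σ_{c ∈ I(r,ℓ)} (Π_{j=1}^{r-1} f_{c_j}(N_j,N_{j+1})) f_{c_r}(N_r,M)`. -/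
def hS (q : ℝ) (r l : ℕ) (N : Fin r → ℕ) (M : ℕ) : ℝ :=
  ∑ c ∈ Ifin r l,
    ∏ j : Fin r, fS q (c j) (N j) (if h : (j : ℕ) + 1 < r then N ⟨(j : ℕ) + 1, h⟩ else M)

/-- `p(n_1,...,n_s;m) = (q^{n_1-m}/[n_1-m]) Π_{j=2}^{s} 1/[n_j-m]`, with `p(∅;m) = 1`. -/
def pS (q : ℝ) {s : ℕ} (n : Fin s → ℕ) (m : ℕ) : ℝ :=
  ∏ j : Fin s, (if (j : ℕ) = 0 then q ^ (n j - m) else 1) / qint q (n j - m)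

/-! ### The algebras 𝔡, 𝔡_ξ and 𝔡₁ -/

/-- The alphabet `S = {z_k}_{k ≥ 1} ∪ {ξ_k}_{k ≥ 1}`: `Sum.inl k = z_k`, `Sum.inr k = ξ_k`. -/
abbrev Letter : Type := ℕ+ ⊕ ℕ+

/-- The noncommutative polynomial algebra 𝔡 over ℤ freely generated by `S`. -/
abbrev Dfree : Type := MonoidAlgebra ℤ (FreeMonoid Letter)

/-- The subalgebra 𝔡_ξ generated by the `ξ_k`, realized as a free algebra on `{ξ_k}_{k≥1}`. -/
abbrev DXi : Type := MonoidAlgebra ℤ (FreeMonoid ℕ+)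

/-- The subalgebra 𝔡₁ generated by `z_1` and `ξ_1`, realized as a free algebra on two letters
(`false = z_1`, `true = ξ_1`). -/
abbrev DOne : Type := MonoidAlgebra ℤ (FreeMonoid Bool)

/-- The generator `z_k` of 𝔡. -/
def zL (k : ℕ+) : Dfree := MonoidAlgebra.single (FreeMonoid.of (Sum.inl k)) 1

/-- The generator `ξ_k` of 𝔡. -/
def xiL (k : ℕ+) : Dfree := MonoidAlgebra.single (FreeMonoid.of (Sum.inr k)) 1

/-- The generator `ξ_k` of 𝔡_ξ. -/
def xiX (k : ℕ+) : DXi := MonoidAlgebra.single (FreeMonoid.of k) 1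

/-- The generator `z_1` of 𝔡₁. -/
def zO : DOne := MonoidAlgebra.single (FreeMonoid.of false) 1

/-- The generator `ξ_1` of 𝔡₁. -/
def xiO : DOne := MonoidAlgebra.single (FreeMonoid.of true) 1

/-- `z_k` for a natural number index `k ≥ 1` (junk value `0` for `k = 0`). -/
def zOf (k : ℕ) : Dfree := if h : 0 < k then zL ⟨k, h⟩ else 0

/-- `ξ_k ∈ 𝔡_ξ` for a natural number index `k ≥ 1` (junk value `0` for `k = 0`). -/
def xiOf (k : ℕ) : DXi := if h : 0 < k then xiX ⟨k, h⟩ else 0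

/-- The canonical embedding `𝔡_ξ ↪ 𝔡`. -/
def toD (v : DXi) : Dfree := MonoidAlgebra.ofCoeff (Finsupp.mapDomain (FreeMonoid.map Sum.inr) v.coeff)

/-- The canonical embedding `𝔡₁ ↪ 𝔡` (`false ↦ z_1`, `true ↦ ξ_1`). -/
def toD1 (w : DOne) : Dfree :=
  MonoidAlgebra.ofCoeff (Finsupp.mapDomain (FreeMonoid.map fun b => if b then Sum.inr 1 else Sum.inl 1) w.coeff)

/-- `J_{z_k}(m) = q^{(k-1)m}/[m]^k` and `J_{ξ_k}(m) = q^{km}/[m]^k`. -/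
def Jlet (q : ℝ) : Letter → ℕ → ℝ
  | Sum.inl k, m => q ^ (((k : ℕ) - 1) * m) / qint q m ^ (k : ℕ)
  | Sum.inr k, m => q ^ ((k : ℕ) * m) / qint q m ^ (k : ℕ)

/-- `A_w(M) = Σ_{M > m_1 > ... > m_r > 0} J_{u_1}(m_1) ⋯ J_{u_r}(m_r)` for a word `w = u_1 ⋯ u_r`. -/
def AW (q : ℝ) (w : List Letter) (M : ℕ) : ℝ :=
  ∑ m ∈ (Fintype.piFinset fun _ : Fin w.length => Finset.Ioo 0 M).filter
      (fun m => ∀ i j, i < j → m j < m i),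
    ∏ j, Jlet q (w.get j) (m j)

/-- `A*_w(M) = Σ_{M > m_1 ≥ ... ≥ m_r ≥ 1} J_{u_1}(m_1) ⋯ J_{u_r}(m_r)` for a word `w = u_1 ⋯ u_r`. -/
def AstarW (q : ℝ) (w : List Letter) (M : ℕ) : ℝ :=
  ∑ m ∈ (Fintype.piFinset fun _ : Fin w.length => Finset.Ioo 0 M).filter
      (fun m => ∀ i j, i ≤ j → m j ≤ m i),
    ∏ j, Jlet q (w.get j) (m j)

/-- The ℤ-linear extension `A(M) : 𝔡 → ℝ`. -/
def Amap (q : ℝ) (x : Dfree) (M : ℕ) : ℝ :=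
  Finsupp.sum x.coeff fun w a => (a : ℝ) * AW q (FreeMonoid.toList w) M

/-- The ℤ-linear extension `A*(M) : 𝔡 → ℝ`. -/
def Astarmap (q : ℝ) (x : Dfree) (M : ℕ) : ℝ :=
  Finsupp.sum x.coeff fun w a => (a : ℝ) * AstarW q (FreeMonoid.toList w) M

/-- The map `ρ` on words:  `ρ(1,w) = w`, `ρ(v,1) = v`,
`ρ(ξ_k v, z_ℓ w) = ξ_k ρ(v, z_ℓ w) + z_ℓ ρ(ξ_k v, w) + z_{k+ℓ} ρ(v,w)`, and
`ρ(ξ_k v, ξ_ℓ w) = ξ_k ρ(v, ξ_ℓ w) + ξ_ℓ ρ(ξ_k v, w) + ξ_{k+ℓ} ρ(v,w)`. -/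
def rhoW : List ℕ+ → List Letter → Dfree
  | [], w => MonoidAlgebra.single (FreeMonoid.ofList w) 1
  | k :: v, [] => MonoidAlgebra.single (FreeMonoid.ofList ((k :: v).map Sum.inr)) 1
  | k :: v, Sum.inl l :: w =>
      xiL k * rhoW v (Sum.inl l :: w) + zL l * rhoW (k :: v) w + zL (k + l) * rhoW v w
  | k :: v, Sum.inr l :: w =>
      xiL k * rhoW v (Sum.inr l :: w) + xiL l * rhoW (k :: v) w + xiL (k + l) * rhoW v w
  termination_by v w => v.length + w.length

/-- The ℤ-bilinear map `ρ : 𝔡_ξ × 𝔡 → 𝔡`. -/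
def rho (v : DXi) (x : Dfree) : Dfree :=
  Finsupp.sum v.coeff fun vw a =>
    Finsupp.sum x.coeff fun xw b => (a * b) • rhoW (FreeMonoid.toList vw) (FreeMonoid.toList xw)

/-- `ξ_k ∘ ·` on words: `ξ_k ∘ 1 = 0` and `ξ_k ∘ (ξ_ℓ v) = ξ_{k+ℓ} v`. -/
def circW (k : ℕ+) : List ℕ+ → DXi
  | [] => 0
  | l :: v => MonoidAlgebra.single (FreeMonoid.ofList ((k + l) :: v)) 1

/-- The ℤ-linear map `ξ_k ∘ · : 𝔡_ξ → 𝔡_ξ`. -/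
def circ (k : ℕ+) (x : DXi) : DXi :=
  Finsupp.sum x.coeff fun w a => a • circW k (FreeMonoid.toList w)

/-- The map `d` on words: `d(1) = 1` and `d(ξ_k v) = ξ_k d(v) + ξ_k ∘ d(v)`. -/
def dW : List ℕ+ → DXi
  | [] => 1
  | k :: v => xiX k * dW v + circ k (dW v)

/-- The ℤ-linear map `d : 𝔡_ξ → 𝔡_ξ`. -/
def dmap (v : DXi) : DXi := Finsupp.sum v.coeff fun w a => a • dW (FreeMonoid.toList w)

/-- The maps `φ_s` on words of 𝔡₁: `φ_0 = id`, `φ_s(1) = ξ_1 z_1^{s-1}` for `s ≥ 1`,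
`φ_s(z_1 w) = z_1 φ_s(w) + ξ_1 Σ_{i=1}^{s} z_1^i φ_{s-i}(w)`, and
`φ_s(ξ_1 w) = ξ_1 Σ_{i=0}^{s} z_1^i φ_{s-i}(w)`. -/
def phiW : ℕ → List Bool → DOne
  | s, [] =>
      if s = 0 then 1
      else MonoidAlgebra.single (FreeMonoid.ofList (true :: List.replicate (s - 1) false)) 1
  | s, false :: w =>
      zO * phiW s w +
        ∑ i ∈ Finset.Icc 1 s, xiO * zO ^ i * phiW (s - i) w
  | s, true :: w =>
      ∑ i ∈ Finset.range (s + 1), xiO * zO ^ i * phiW (s - i) w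
  termination_by _ w => w.length

/-- The ℤ-linear maps `φ_s : 𝔡₁ → 𝔡₁`. -/
def phi (s : ℕ) (x : DOne) : DOne := Finsupp.sum x.coeff fun w a => a • phiW s (FreeMonoid.toList w)

/-- `Φ_0 = id` and `Φ_ℓ = Σ_{r=1}^{ℓ} (-1)^r Σ_{c ∈ I(r,ℓ)} φ_{c_1} ⋯ φ_{c_r}` for `ℓ ≥ 1`. -/
def PhiM : ℕ → DOne → DOne
  | 0 => id
  | l + 1 => fun x =>
      ∑ r ∈ Finset.Icc 1 (l + 1),
        (-1 : ℤ) ^ r •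
          ∑ c ∈ Ifin r (l + 1), ((List.ofFn fun j : Fin r => phi (c j)).foldr (· ∘ ·) id) x

/-- `Z_s(w) = Σ_{ℓ=0}^{s} ρ(d(ξ_1^{s-ℓ}), Φ_ℓ(w))`. -/
def Zmap (s : ℕ) (w : DOne) : Dfree :=
  ∑ l ∈ Finset.range (s + 1), rho (dmap (xiX 1 ^ (s - l))) (toD1 (PhiM l w))
/-! ### Auxiliary development for the proof -/

section ZAux
open Finset

/-! #### Basic `rho` lemmas -/

lemma rho_single_single (vw : FreeMonoid ℕ+) (xw : FreeMonoid Letter) (a b : ℤ) :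
    rho (MonoidAlgebra.single vw a) (MonoidAlgebra.single xw b)
      = (a * b) • rhoW vw.toList xw.toList := by
  unfold rho
  rw [MonoidAlgebra.coeff_single, MonoidAlgebra.coeff_single]
  rw [Finsupp.sum_single_index (by simp), Finsupp.sum_single_index (by simp)]

lemma rho_zero_left (x : Dfree) : rho 0 x = 0 := by simp [rho]

lemma rho_zero_right (v : DXi) : rho v 0 = 0 := by simp [rho]

lemma rho_add_left (v v' : DXi) (x : Dfree) :
    rho (v + v') x = rho v x + rho v' x := by
  unfold rho
  rw [MonoidAlgebra.coeff_add]
  refine Finsupp.sum_add_index' (by intro a; simp) ?_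
  intro w a a'
  simp [add_mul, add_smul, Finsupp.sum_add]

lemma rho_add_right (v : DXi) (x y : Dfree) :
    rho v (x + y) = rho v x + rho v y := by
  unfold rho
  rw [← Finsupp.sum_add]
  refine Finsupp.sum_congr fun vw _ => ?_
  rw [MonoidAlgebra.coeff_add]
  refine Finsupp.sum_add_index' (by intro a; simp) ?_
  intro w a a'
  simp [mul_add, add_smul]

/-- `rho` as an additive monoid hom in the first variable. -/
def rhoAddL (x : Dfree) : DXi →+ Dfree :=
  { toFun := fun v => rho v x
    map_zero' := rho_zero_left x
    map_add' := fun a b => rho_add_left a b x }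

/-- `rho` as an additive monoid hom in the second variable. -/
def rhoAddR (v : DXi) : Dfree →+ Dfree :=
  { toFun := fun x => rho v x
    map_zero' := rho_zero_right v
    map_add' := rho_add_right v }

lemma rho_sum_left {ι : Type*} (s : Finset ι) (f : ι → DXi) (x : Dfree) :
    rho (∑ i ∈ s, f i) x = ∑ i ∈ s, rho (f i) x :=
  map_sum (rhoAddL x) f s

lemma rho_sum_right {ι : Type*} (v : DXi) (s : Finset ι) (f : ι → Dfree) :
    rho v (∑ i ∈ s, f i) = ∑ i ∈ s, rho v (f i) :=
  map_sum (rhoAddR v) f s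

lemma rho_smul_right (c : ℤ) (v : DXi) (x : Dfree) :
    rho v (c • x) = c • rho v x := by
  induction x using MonoidAlgebra.induction_linear with
  | zero => simp [rho_zero_right]
  | add f g hf hg => rw [smul_add, rho_add_right, rho_add_right, hf, hg, smul_add]
  | single w b =>
    induction v using MonoidAlgebra.induction_linear with
    | zero => simp [rho_zero_left]
    | add f g hf hg => rw [rho_add_left, rho_add_left, hf, hg, smul_add]
    | single vw a =>
      rw [show (c • MonoidAlgebra.single w b : Dfree) = MonoidAlgebra.single w (c * b) from
        MonoidAlgebra.smul_single' c w b]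
      rw [rho_single_single, rho_single_single, smul_smul]
      ring_nf

/-! #### Generators and words -/

lemma xiX_mul_single (k : ℕ+) (w : FreeMonoid ℕ+) (a : ℤ) :
    xiX k * MonoidAlgebra.single w a = MonoidAlgebra.single (FreeMonoid.of k * w) a := by
  simp [xiX, MonoidAlgebra.single_mul_single]

lemma zL_mul_single (l : ℕ+) (w : FreeMonoid Letter) (a : ℤ) :
    zL l * MonoidAlgebra.single w a = MonoidAlgebra.single (FreeMonoid.of (Sum.inl l) * w) a := by
  simp [zL, MonoidAlgebra.single_mul_single]

lemma xiL_mul_single (l : ℕ+) (w : FreeMonoid Letter) (a : ℤ) :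
    xiL l * MonoidAlgebra.single w a = MonoidAlgebra.single (FreeMonoid.of (Sum.inr l) * w) a := by
  simp [xiL, MonoidAlgebra.single_mul_single]

lemma rhoW_nil_left (w : List Letter) :
    rhoW [] w = MonoidAlgebra.single (FreeMonoid.ofList w) 1 := by
  simp [rhoW]

lemma rhoW_nil_right (v : List ℕ+) :
    rhoW v [] = MonoidAlgebra.single (FreeMonoid.ofList (v.map Sum.inr)) 1 := by
  cases v <;> simp [rhoW]

lemma rho_one_left (x : Dfree) : rho 1 x = x := by
  induction x using MonoidAlgebra.induction_linear with
  | zero => exact rho_zero_right _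
  | add f g hf hg => rw [rho_add_right, hf, hg]
  | single w b =>
    rw [MonoidAlgebra.one_def, rho_single_single, FreeMonoid.toList_one, rhoW_nil_left]
    simp [FreeMonoid.ofList_toList]

lemma rho_xi_one (k : ℕ+) (v : DXi) : rho (xiX k * v) 1 = xiL k * rho v 1 := by
  induction v using MonoidAlgebra.induction_linear with
  | zero => simp [rho_zero_left]
  | add f g hf hg => rw [mul_add, rho_add_left, hf, hg, rho_add_left, mul_add]
  | single vw a =>
    rw [xiX_mul_single, MonoidAlgebra.one_def, rho_single_single, rho_single_single,
      FreeMonoid.toList_of_mul, FreeMonoid.toList_one, rhoW_nil_right, rhoW_nil_right,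
      List.map_cons]
    rw [mul_smul_comm, xiL_mul_single, ← FreeMonoid.ofList_cons]

lemma rhoW_cons_z (k l : ℕ+) (v : List ℕ+) (w : List Letter) :
    rhoW (k :: v) (Sum.inl l :: w)
      = xiL k * rhoW v (Sum.inl l :: w) + zL l * rhoW (k :: v) w + zL (k + l) * rhoW v w := by
  rw [rhoW]

lemma rhoW_cons_xi (k l : ℕ+) (v : List ℕ+) (w : List Letter) :
    rhoW (k :: v) (Sum.inr l :: w)
      = xiL k * rhoW v (Sum.inr l :: w) + xiL l * rhoW (k :: v) w + xiL (k + l) * rhoW v w := by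
  rw [rhoW]

lemma rho_xi_z (k l : ℕ+) (v : DXi) (x : Dfree) :
    rho (xiX k * v) (zL l * x)
      = xiL k * rho v (zL l * x) + zL l * rho (xiX k * v) x + zL (k + l) * rho v x := by
  induction v using MonoidAlgebra.induction_linear with
  | zero => simp [rho_zero_left]
  | add f g hf hg =>
    rw [mul_add, rho_add_left, rho_add_left, rho_add_left, rho_add_left, hf, hg]
    simp only [mul_add]
    abel
  | single vw a =>
    induction x using MonoidAlgebra.induction_linear with
    | zero => simp [rho_zero_right]
    | add f g hf hg =>
      rw [mul_add, rho_add_right, rho_add_right, rho_add_right, rho_add_right, hf, hg]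
      simp only [mul_add]
      abel
    | single xw b =>
      rw [xiX_mul_single, zL_mul_single, rho_single_single, FreeMonoid.toList_of_mul,
        FreeMonoid.toList_of_mul, rhoW_cons_z, rho_single_single, rho_single_single,
        rho_single_single, FreeMonoid.toList_of_mul, FreeMonoid.toList_of_mul]
      simp only [mul_smul_comm, smul_add]

lemma rho_xi_xi (k l : ℕ+) (v : DXi) (x : Dfree) :
    rho (xiX k * v) (xiL l * x)
      = xiL k * rho v (xiL l * x) + xiL l * rho (xiX k * v) x + xiL (k + l) * rho v x := by
  induction v using MonoidAlgebra.induction_linear with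
  | zero => simp [rho_zero_left]
  | add f g hf hg =>
    rw [mul_add, rho_add_left, rho_add_left, rho_add_left, rho_add_left, hf, hg]
    simp only [mul_add]
    abel
  | single vw a =>
    induction x using MonoidAlgebra.induction_linear with
    | zero => simp [rho_zero_right]
    | add f g hf hg =>
      rw [mul_add, rho_add_right, rho_add_right, rho_add_right, rho_add_right, hf, hg]
      simp only [mul_add]
      abel
    | single xw b =>
      rw [xiX_mul_single, xiL_mul_single, rho_single_single, FreeMonoid.toList_of_mul,
        FreeMonoid.toList_of_mul, rhoW_cons_xi, rho_single_single, rho_single_single,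
        rho_single_single, FreeMonoid.toList_of_mul, FreeMonoid.toList_of_mul]
      simp only [mul_smul_comm, smul_add]

end ZAux
section ZAux2
open Finset

/-! #### `phi` basics -/

lemma phi_single (s : ℕ) (w : FreeMonoid Bool) (a : ℤ) :
    phi s (MonoidAlgebra.single w a) = a • phiW s w.toList := by
  unfold phi; rw [MonoidAlgebra.coeff_single]; exact Finsupp.sum_single_index (by simp)

lemma phi_zero (s : ℕ) : phi s 0 = 0 := by simp [phi]

lemma phi_add (s : ℕ) (x y : DOne) : phi s (x + y) = phi s x + phi s y := by
  unfold phi; rw [MonoidAlgebra.coeff_add]; exact Finsupp.sum_add_index' (by intro a; simp) (by intro w a a'; simp [add_smul])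

/-- `phi` as an additive monoid hom. -/
def phiAdd (s : ℕ) : DOne →+ DOne :=
  { toFun := phi s, map_zero' := phi_zero s, map_add' := phi_add s }

lemma phi_sum {ι : Type*} (s : ℕ) (t : Finset ι) (f : ι → DOne) :
    phi s (∑ i ∈ t, f i) = ∑ i ∈ t, phi s (f i) :=
  map_sum (phiAdd s) f t

lemma phi_smul (s : ℕ) (c : ℤ) (x : DOne) : phi s (c • x) = c • phi s x := by
  induction x using MonoidAlgebra.induction_linear with
  | zero => simp [phi_zero]
  | add f g hf hg => rw [smul_add, phi_add, phi_add, hf, hg, smul_add]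
  | single w b =>
    rw [show (c • MonoidAlgebra.single w b : DOne) = MonoidAlgebra.single w (c * b) from
      MonoidAlgebra.smul_single' c w b, phi_single, phi_single, mul_smul]

lemma phi_single' (s : ℕ) (w : FreeMonoid Bool) (a : ℤ) :
    phi s (MonoidAlgebra.single w a) = a • phiW s w.toList :=
  phi_single s w a

lemma phi_add' (s : ℕ) (x y : DOne) : phi s (x + y) = phi s x + phi s y :=
  phi_add s x y

lemma zO_mul_single (w : FreeMonoid Bool) (a : ℤ) :
    zO * MonoidAlgebra.single w a = MonoidAlgebra.single (FreeMonoid.of false * w) a := by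
  simp [zO, MonoidAlgebra.single_mul_single]

lemma xiO_mul_single (w : FreeMonoid Bool) (a : ℤ) :
    xiO * MonoidAlgebra.single w a = MonoidAlgebra.single (FreeMonoid.of true * w) a := by
  simp [xiO, MonoidAlgebra.single_mul_single]

lemma phiW_zero (w : List Bool) : phiW 0 w = MonoidAlgebra.single (FreeMonoid.ofList w) 1 := by
  induction w with
  | nil => simp [phiW, MonoidAlgebra.one_def]
  | cons b w ih =>
    cases b <;> rw [phiW] <;>
      simp [ih, zO_mul_single, xiO_mul_single, FreeMonoid.ofList_cons]

lemma phi_zero_apply (x : DOne) : phi 0 x = x := by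
  induction x using MonoidAlgebra.induction_linear with
  | zero => simp [phi_zero]
  | add f g hf hg => rw [phi_add, hf, hg]
  | single w b =>
    rw [phi_single, phiW_zero, FreeMonoid.ofList_toList]
    simp [MonoidAlgebra.smul_single']

lemma zO_pow (m : ℕ) :
    (zO ^ m : DOne) = MonoidAlgebra.single (FreeMonoid.ofList (List.replicate m false)) 1 := by
  induction m with
  | zero => simp [MonoidAlgebra.one_def]
  | succ m ih =>
    rw [pow_succ', ih, zO_mul_single, List.replicate_succ, FreeMonoid.ofList_cons]

lemma phi_one_apply (n : ℕ) : phi (n + 1) 1 = xiO * zO ^ n := by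
  rw [MonoidAlgebra.one_def, phi_single, FreeMonoid.toList_one]
  rw [phiW, if_neg (Nat.succ_ne_zero n)]
  rw [zO_pow, xiO_mul_single, ← FreeMonoid.ofList_cons]
  simp

lemma phi_zO_mul (s : ℕ) (x : DOne) :
    phi s (zO * x) = zO * phi s x + ∑ i ∈ Icc 1 s, xiO * zO ^ i * phi (s - i) x := by
  induction x using MonoidAlgebra.induction_linear with
  | zero => simp [phi_zero]
  | add f g hf hg =>
    rw [mul_add, phi_add, phi_add, hf, hg]
    simp only [phi_add', mul_add]
    rw [Finset.sum_add_distrib]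
    abel
  | single w b =>
    rw [zO_mul_single, phi_single, FreeMonoid.toList_of_mul, phiW]
    simp only [phi_single', smul_add, Finset.smul_sum, mul_smul_comm]

lemma phi_xiO_mul (s : ℕ) (x : DOne) :
    phi s (xiO * x) = ∑ i ∈ Finset.range (s + 1), xiO * zO ^ i * phi (s - i) x := by
  induction x using MonoidAlgebra.induction_linear with
  | zero => simp [phi_zero]
  | add f g hf hg =>
    rw [mul_add, phi_add, hf, hg]
    simp only [phi_add', mul_add]
    rw [Finset.sum_add_distrib]
  | single w b =>
    rw [xiO_mul_single, phi_single, FreeMonoid.toList_of_mul, phiW]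
    simp only [phi_single', smul_add, Finset.smul_sum, mul_smul_comm]

/-! #### `circ` and `dmap` -/

lemma circ_zero (j : ℕ+) : circ j 0 = 0 := by simp [circ]

lemma circ_add (j : ℕ+) (x y : DXi) : circ j (x + y) = circ j x + circ j y := by
  unfold circ; rw [MonoidAlgebra.coeff_add]; exact Finsupp.sum_add_index' (by intro a; simp) (by intro w a a'; simp [add_smul])

/-- `circ` as an additive monoid hom. -/
def circAdd (j : ℕ+) : DXi →+ DXi :=
  { toFun := circ j, map_zero' := circ_zero j, map_add' := circ_add j }

lemma circ_sum {ι : Type*} (j : ℕ+) (t : Finset ι) (f : ι → DXi) :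
    circ j (∑ i ∈ t, f i) = ∑ i ∈ t, circ j (f i) :=
  map_sum (circAdd j) f t

lemma circ_one (j : ℕ+) : circ j 1 = 0 := by
  rw [MonoidAlgebra.one_def, circ, MonoidAlgebra.coeff_single, Finsupp.sum_single_index (by simp)]
  rw [FreeMonoid.toList_one]
  simp [circW]

lemma circ_xi_mul (j l : ℕ+) (u : DXi) : circ j (xiX l * u) = xiX (j + l) * u := by
  induction u using MonoidAlgebra.induction_linear with
  | zero => simp [circ_zero]
  | add f g hf hg => rw [mul_add, circ_add, hf, hg, mul_add]
  | single w a =>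
    rw [xiX_mul_single, circ, MonoidAlgebra.coeff_single, Finsupp.sum_single_index (by simp), FreeMonoid.toList_of_mul,
      circW, FreeMonoid.ofList_cons, FreeMonoid.ofList_toList, xiX_mul_single]
    simp [MonoidAlgebra.smul_single']

/-- `D_m = Σ_{c ∈ I(r,m), r ≥ 0} ξ_c`, defined by the recursion
`D_0 = 1`, `D_m = Σ_{k=1}^{m} ξ_k D_{m-k}`. -/
def DD : ℕ → DXi
  | 0 => 1
  | m + 1 => ∑ k ∈ Finset.range (m + 1), xiX ⟨k + 1, Nat.succ_pos k⟩ * DD (m - k)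
  decreasing_by omega

lemma pnat_one_add (k : ℕ) :
    (1 : ℕ+) + ⟨k + 1, Nat.succ_pos k⟩ = (⟨k + 2, Nat.succ_pos _⟩ : ℕ+) := by
  apply PNat.coe_injective
  change 1 + (k + 1) = k + 2
  omega

lemma circ_DD (m : ℕ) :
    circ 1 (DD m) = ∑ k ∈ Finset.range m, xiX ⟨k + 2, Nat.succ_pos _⟩ * DD (m - 1 - k) := by
  cases m with
  | zero => simp [DD, circ_one]
  | succ m =>
    rw [DD, circ_sum]
    refine Finset.sum_congr rfl fun k hk => ?_
    erw [circ_xi_mul, pnat_one_add]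
    norm_num

lemma xiX1_pow (m : ℕ) :
    (xiX 1 ^ m : DXi) = MonoidAlgebra.single (FreeMonoid.ofList (List.replicate m 1)) 1 := by
  induction m with
  | zero => simp [MonoidAlgebra.one_def]
  | succ m ih =>
    rw [pow_succ', ih, xiX_mul_single, List.replicate_succ, FreeMonoid.ofList_cons]

lemma dW_replicate (m : ℕ) : dW (List.replicate m 1) = DD m := by
  induction m with
  | zero => simp [dW, DD]
  | succ m ih =>
    rw [List.replicate_succ, dW, ih, circ_DD, DD, Finset.sum_range_succ']
    have h1 : (⟨0 + 1, Nat.succ_pos 0⟩ : ℕ+) = 1 := rfl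
    rw [h1, Nat.sub_zero, add_comm]
    congr 1
    refine Finset.sum_congr rfl fun k hk => ?_
    congr 2
    omega

lemma dmap_xiX1_pow (m : ℕ) : dmap (xiX 1 ^ m) = DD m := by
  rw [xiX1_pow, dmap, MonoidAlgebra.coeff_single, Finsupp.sum_single_index (by simp), one_smul,
    FreeMonoid.toList_ofList, dW_replicate]

/-! #### `BB` and `TT` -/

/-- `B(a,l)`: the sum of all words in `z_1, ξ_1` with `a` letters `z_1` and `l` letters `ξ_1`. -/
def BB : ℕ → ℕ → DOne
  | 0, 0 => 1
  | 0, l + 1 => xiO * BB 0 l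
  | a + 1, 0 => zO * BB a 0
  | a + 1, l + 1 => zO * BB a (l + 1) + xiO * BB (a + 1) l
  termination_by a l => a + l

lemma BB_zero (a : ℕ) : BB a 0 = zO ^ a := by
  induction a with
  | zero => rw [BB]; rfl
  | succ a ih => rw [BB, ih, pow_succ']

/-- The target sums, defined recursively. -/
def TT : ℕ → ℕ → Dfree
  | s, 0 => if s = 0 then 1 else 0
  | s, a + 1 => ∑ k ∈ Finset.range (s + 1), zOf (k + 1) * TT (s - k) a

/-! #### `toD1` lemmas -/

lemma toD1_ringHom : toD1 = ⇑(MonoidAlgebra.mapDomainRingHom ℤ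
    (FreeMonoid.map fun b => if b then Sum.inr 1 else Sum.inl 1)) := rfl

lemma toD1_one : toD1 1 = 1 := by rw [toD1_ringHom, map_one]

lemma toD1_mul (x y : DOne) : toD1 (x * y) = toD1 x * toD1 y := by
  rw [toD1_ringHom]; exact map_mul _ x y

lemma toD1_add (x y : DOne) : toD1 (x + y) = toD1 x + toD1 y := by
  rw [toD1_ringHom]; exact map_add _ x y

lemma toD1_smul (c : ℤ) (x : DOne) : toD1 (c • x) = c • toD1 x := by
  rw [toD1_ringHom]; exact map_zsmul _ c x

lemma toD1_zO : toD1 zO = zL 1 := by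
  rw [toD1_ringHom]
  show MonoidAlgebra.mapDomain _ (MonoidAlgebra.single (FreeMonoid.of false) 1) = _
  rw [MonoidAlgebra.mapDomain_single, FreeMonoid.map_of]
  rfl

lemma toD1_xiO : toD1 xiO = xiL 1 := by
  rw [toD1_ringHom]
  show MonoidAlgebra.mapDomain _ (MonoidAlgebra.single (FreeMonoid.of true) 1) = _
  rw [MonoidAlgebra.mapDomain_single, FreeMonoid.map_of]
  rfl

end ZAux2
section ZAux3
open Finset

/-! #### Sum reindexing utilities -/

lemma sum_Icc_one {M : Type*} [AddCommMonoid M] (n : ℕ) (f : ℕ → M) :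
    ∑ i ∈ Icc 1 n, f i = ∑ i ∈ range n, f (i + 1) := by
  rw [← Finset.Ico_add_one_right_eq_Icc, Finset.sum_Ico_eq_sum_range]
  simp [add_comm]

lemma sum_tri {M : Type*} [AddCommMonoid M] (n : ℕ) (F : ℕ → ℕ → M) :
    ∑ i ∈ range (n + 1), ∑ p ∈ Icc 1 i, F i p
      = ∑ p ∈ Icc 1 n, ∑ i ∈ range (n - p + 1), F (i + p) p := by
  rw [Finset.sum_comm' (s' := fun p => Icc p n) (t' := Icc 1 n)
    (by intro x y; simp only [mem_range, mem_Icc]; omega)]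
  refine Finset.sum_congr rfl fun p hp => ?_
  rw [mem_Icc] at hp
  rw [← Finset.Ico_add_one_right_eq_Icc, Finset.sum_Ico_eq_sum_range]
  have h : n + 1 - p = n - p + 1 := by omega
  rw [h]
  exact Finset.sum_congr rfl fun i _ => by rw [add_comm]

lemma sum_tri0 {M : Type*} [AddCommMonoid M] (n : ℕ) (F : ℕ → ℕ → M) :
    ∑ i ∈ range n, ∑ p ∈ range (i + 1), F i p
      = ∑ p ∈ range n, ∑ i ∈ range (n - p), F (i + p) p := by
  rw [Finset.sum_comm' (s' := fun p => Ico p n) (t' := range n)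
    (by intro x y; simp only [mem_range, mem_Ico]; omega)]
  refine Finset.sum_congr rfl fun p hp => ?_
  rw [Finset.sum_Ico_eq_sum_range]
  exact Finset.sum_congr rfl fun i _ => by rw [add_comm]

lemma sum_tri1 {M : Type*} [AddCommMonoid M] (n : ℕ) (F : ℕ → ℕ → M) :
    ∑ l ∈ range (n + 1), ∑ k ∈ range (n - l), F l k
      = ∑ k ∈ range n, ∑ l ∈ range (n - k), F l k :=
  Finset.sum_comm' (by intro x y; simp only [mem_range]; omega)

lemma sum_tri2 {M : Type*} [AddCommMonoid M] (n : ℕ) (F : ℕ → ℕ → M) :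
    ∑ l ∈ range n, ∑ k ∈ range (n - 1 - l), F l k
      = ∑ k ∈ range (n - 1), ∑ l ∈ range (n - 1 - k), F l k :=
  Finset.sum_comm' (by intro x y; simp only [mem_range]; omega)

/-! #### The `SS` vanishing lemma -/

lemma BB_zero_zero : BB 0 0 = 1 := by rw [BB]

lemma BB_zero_succ (l : ℕ) : BB 0 (l + 1) = xiO * BB 0 l := by rw [BB]

lemma BB_succ_zero (a : ℕ) : BB (a + 1) 0 = zO * BB a 0 := by rw [BB]

lemma BB_succ_succ (a l : ℕ) : BB (a + 1) (l + 1) = zO * BB a (l + 1) + xiO * BB (a + 1) l := by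
  rw [BB]

/-- `S(a,n) = Σ_{i=0}^{n} (-1)^{n-i} φ_i(B(a,n-i))`. -/
def SSd (a n : ℕ) : DOne := ∑ i ∈ range (n + 1), ((-1 : ℤ)) ^ (n - i) • phi i (BB a (n - i))

lemma neg_one_pow_smul_succ {M : Type*} [AddCommGroup M] [Module ℤ M] (e : ℕ) (x : M) :
    ((-1 : ℤ)) ^ (e + 1) • x = -(((-1 : ℤ)) ^ e • x) := by
  rw [pow_succ, mul_neg_one]
  exact neg_zsmul x ((-1 : ℤ) ^ e)

lemma SSd_eq : ∀ a n, SSd a n = if n = 0 then zO ^ a else 0 := by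
  intro a
  induction a with
  | zero =>
    intro n
    induction n using Nat.strong_induction_on with
    | _ n ihn =>
      match n with
      | 0 => simp [SSd, phi_zero_apply, BB_zero_zero]
      | n + 1 =>
        rw [SSd, Finset.sum_range_succ, Nat.sub_self, pow_zero, one_smul, BB_zero_zero,
          phi_one_apply, if_neg (Nat.succ_ne_zero n)]
        have h1 : ∀ i ∈ range (n + 1), ((-1 : ℤ)) ^ (n + 1 - i) • phi i (BB 0 (n + 1 - i))
            = ∑ p ∈ range (i + 1),
                xiO * zO ^ p * (((-1 : ℤ)) ^ (n + 1 - i) • phi (i - p) (BB 0 (n - i))) := by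
          intro i hi
          rw [mem_range] at hi
          have h : n + 1 - i = (n - i) + 1 := by omega
          rw [h, BB_zero_succ, phi_xiO_mul, Finset.smul_sum]
          exact Finset.sum_congr rfl fun p _ => (mul_smul_comm _ _ _).symm
        rw [Finset.sum_congr rfl h1, sum_tri0 (n + 1)]
        have h2 : ∀ p ∈ range (n + 1), (∑ i ∈ range (n + 1 - p),
              xiO * zO ^ p * (((-1 : ℤ)) ^ (n + 1 - (i + p)) • phi (i + p - p) (BB 0 (n - (i + p)))))
            = -(xiO * zO ^ p * SSd 0 (n - p)) := by
          intro p hp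
          rw [mem_range] at hp
          have h3 : ∀ i ∈ range (n + 1 - p),
              xiO * zO ^ p * (((-1 : ℤ)) ^ (n + 1 - (i + p)) • phi (i + p - p) (BB 0 (n - (i + p))))
              = -(xiO * zO ^ p * (((-1 : ℤ)) ^ (n - p - i) • phi i (BB 0 (n - p - i)))) := by
            intro i hi
            rw [mem_range] at hi
            have e1 : i + p - p = i := by omega
            have e2 : n - (i + p) = n - p - i := by omega
            have e3 : n + 1 - (i + p) = (n - p - i) + 1 := by omega
            rw [e1, e2, e3, neg_one_pow_smul_succ, mul_neg]
          rw [Finset.sum_congr rfl h3, Finset.sum_neg_distrib, ← Finset.mul_sum]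
          congr 1
          have h4 : n + 1 - p = (n - p) + 1 := by omega
          rw [h4, SSd]
        rw [Finset.sum_congr rfl h2]
        have h5 : ∀ p ∈ range (n + 1), -(xiO * zO ^ p * SSd 0 (n - p))
            = -(xiO * zO ^ p * (if n - p = 0 then (zO:DOne) ^ 0 else 0)) := by
          intro p hp
          rw [mem_range] at hp
          rw [ihn (n - p) (by omega)]
        rw [Finset.sum_congr rfl h5]
        rw [Finset.sum_eq_single n (fun b hb hbne => by
            rw [mem_range] at hb
            rw [if_neg (by omega : ¬(n - b = 0)), mul_zero, neg_zero])
          (fun hn => absurd (mem_range.mpr (Nat.lt_succ_self n)) hn)]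
        rw [Nat.sub_self, if_pos rfl, pow_zero, mul_one]
        abel
  | succ a iha =>
    intro n
    induction n using Nat.strong_induction_on with
    | _ n ihn =>
      match n with
      | 0 => simp [SSd, phi_zero_apply, BB_zero]
      | n + 1 =>
        -- split each term using `BB (a+1) (l+1) = zO * BB a (l+1) + xiO * BB (a+1) l`
        have hBB : ∀ i ∈ range (n + 1),
            ((-1 : ℤ)) ^ (n + 1 - i) • phi i (BB (a + 1) (n + 1 - i))
            = ((-1 : ℤ)) ^ (n + 1 - i) • phi i (zO * BB a (n + 1 - i))
              + ((-1 : ℤ)) ^ (n + 1 - i) • phi i (xiO * BB (a + 1) (n - i)) := by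
          intro i hi
          rw [mem_range] at hi
          have h : n + 1 - i = (n - i) + 1 := by omega
          rw [h, BB_succ_succ, phi_add, smul_add, ← h]
        rw [SSd, Finset.sum_range_succ, Finset.sum_congr rfl hBB, Finset.sum_add_distrib,
          if_neg (Nat.succ_ne_zero n)]
        -- the top term joins the `X`-sum
        have htop : ((-1 : ℤ)) ^ (n + 1 - (n + 1)) • phi (n + 1) (BB (a + 1) (n + 1 - (n + 1)))
            = ((-1 : ℤ)) ^ (n + 1 - (n + 1)) • phi (n + 1) (zO * BB a (n + 1 - (n + 1))) := by
          rw [Nat.sub_self, BB_succ_zero]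
        rw [htop, add_right_comm, ← Finset.sum_range_succ
          (fun i => ((-1 : ℤ)) ^ (n + 1 - i) • phi i (zO * BB a (n + 1 - i))) (n + 1)]
        -- X-part
        have hX : (∑ i ∈ range (n + 1 + 1),
              ((-1 : ℤ)) ^ (n + 1 - i) • phi i (zO * BB a (n + 1 - i)))
            = xiO * zO ^ (n + 1) * zO ^ a := by
          have h1 : ∀ i ∈ range (n + 1 + 1),
              ((-1 : ℤ)) ^ (n + 1 - i) • phi i (zO * BB a (n + 1 - i))
              = zO * (((-1 : ℤ)) ^ (n + 1 - i) • phi i (BB a (n + 1 - i)))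
                + ∑ p ∈ Icc 1 i,
                    xiO * zO ^ p * (((-1 : ℤ)) ^ (n + 1 - i) • phi (i - p) (BB a (n + 1 - i))) := by
            intro i _
            rw [phi_zO_mul, smul_add, mul_smul_comm, Finset.smul_sum]
            congr 1
            exact Finset.sum_congr rfl fun p _ => (mul_smul_comm _ _ _).symm
          rw [Finset.sum_congr rfl h1, Finset.sum_add_distrib, ← Finset.mul_sum, ← SSd,
            iha (n + 1), if_neg (Nat.succ_ne_zero n), mul_zero, zero_add, sum_tri (n + 1)]
          have h2 : ∀ p ∈ Icc 1 (n + 1), (∑ i ∈ range (n + 1 - p + 1),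
                xiO * zO ^ p * (((-1 : ℤ)) ^ (n + 1 - (i + p)) • phi (i + p - p) (BB a (n + 1 - (i + p)))))
              = xiO * zO ^ p * (if n + 1 - p = 0 then (zO:DOne) ^ a else 0) := by
            intro p hp
            rw [mem_Icc] at hp
            have h3 : ∀ i ∈ range (n + 1 - p + 1),
                xiO * zO ^ p * (((-1 : ℤ)) ^ (n + 1 - (i + p)) • phi (i + p - p) (BB a (n + 1 - (i + p))))
                = xiO * zO ^ p * (((-1 : ℤ)) ^ (n + 1 - p - i) • phi i (BB a (n + 1 - p - i))) := by
              intro i hi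
              rw [mem_range] at hi
              have e1 : i + p - p = i := by omega
              have e2 : n + 1 - (i + p) = n + 1 - p - i := by omega
              rw [e1, e2]
            rw [Finset.sum_congr rfl h3, ← Finset.mul_sum, ← SSd, iha (n + 1 - p)]
          rw [Finset.sum_congr rfl h2]
          rw [Finset.sum_eq_single (n + 1) (fun b hb hbne => by
              rw [mem_Icc] at hb
              rw [if_neg (by omega : ¬(n + 1 - b = 0)), mul_zero])
            (fun hn => absurd (mem_Icc.mpr ⟨Nat.one_le_iff_ne_zero.mpr (Nat.succ_ne_zero n),
              le_refl _⟩) hn)]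
          rw [Nat.sub_self, if_pos rfl]
        -- Y-part
        have hY : (∑ i ∈ range (n + 1),
              ((-1 : ℤ)) ^ (n + 1 - i) • phi i (xiO * BB (a + 1) (n - i)))
            = -(xiO * zO ^ n * zO ^ (a + 1)) := by
          have h1 : ∀ i ∈ range (n + 1), ((-1 : ℤ)) ^ (n + 1 - i) • phi i (xiO * BB (a + 1) (n - i))
              = ∑ p ∈ range (i + 1),
                  xiO * zO ^ p * (((-1 : ℤ)) ^ (n + 1 - i) • phi (i - p) (BB (a + 1) (n - i))) := by
            intro i _
            rw [phi_xiO_mul, Finset.smul_sum]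
            exact Finset.sum_congr rfl fun p _ => (mul_smul_comm _ _ _).symm
          rw [Finset.sum_congr rfl h1, sum_tri0 (n + 1)]
          have h2 : ∀ p ∈ range (n + 1), (∑ i ∈ range (n + 1 - p),
                xiO * zO ^ p * (((-1 : ℤ)) ^ (n + 1 - (i + p)) • phi (i + p - p) (BB (a + 1) (n - (i + p)))))
              = -(xiO * zO ^ p * (if n - p = 0 then (zO:DOne) ^ (a + 1) else 0)) := by
            intro p hp
            rw [mem_range] at hp
            have h3 : ∀ i ∈ range (n + 1 - p),
                xiO * zO ^ p * (((-1 : ℤ)) ^ (n + 1 - (i + p)) • phi (i + p - p) (BB (a + 1) (n - (i + p))))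
                = -(xiO * zO ^ p * (((-1 : ℤ)) ^ (n - p - i) • phi i (BB (a + 1) (n - p - i)))) := by
              intro i hi
              rw [mem_range] at hi
              have e1 : i + p - p = i := by omega
              have e2 : n - (i + p) = n - p - i := by omega
              have e3 : n + 1 - (i + p) = (n - p - i) + 1 := by omega
              rw [e1, e2, e3, neg_one_pow_smul_succ, mul_neg]
            rw [Finset.sum_congr rfl h3, Finset.sum_neg_distrib, ← Finset.mul_sum]
            have h4 : n + 1 - p = (n - p) + 1 := by omega
            rw [h4, ← SSd, ihn (n - p) (by omega)]
          rw [Finset.sum_congr rfl h2]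
          rw [Finset.sum_eq_single n (fun b hb hbne => by
              rw [mem_range] at hb
              rw [if_neg (by omega : ¬(n - b = 0)), mul_zero, neg_zero])
            (fun hn => absurd (mem_range.mpr (Nat.lt_succ_self n)) hn)]
          rw [Nat.sub_self, if_pos rfl]
        rw [hX, hY]
        have : xiO * zO ^ (n + 1) * zO ^ a = xiO * zO ^ n * zO ^ (a + 1) := by
          rw [mul_assoc, mul_assoc, ← pow_add, ← pow_add,
            show n + 1 + a = n + (a + 1) from by omega]
        rw [this]
        abel

end ZAux3
section ZAux4
open Finset

/-! #### `Ifin` splitting -/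

lemma Ifin_eq_empty {r n : ℕ} (h : n < r) : Ifin r n = ∅ := by
  rw [Finset.eq_empty_iff_forall_notMem]
  intro c hc
  rw [Ifin, Finset.mem_filter, Fintype.mem_piFinset] at hc
  obtain ⟨hc1, hc2⟩ := hc
  have hr : ∀ i : Fin r, 1 ≤ c i := fun i => (Finset.mem_Icc.mp (hc1 i)).1
  have : (r : ℕ) ≤ ∑ i : Fin r, c i := by
    calc (r : ℕ) = ∑ _i : Fin r, 1 := by simp
    _ ≤ ∑ i : Fin r, c i := Finset.sum_le_sum fun i _ => hr i
  omega

lemma sum_Ifin_zero {M : Type*} [AddCommMonoid M] (n : ℕ) (F : (Fin 0 → ℕ) → M) :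
    ∑ c ∈ Ifin 0 n, F c = if n = 0 then F (fun i => i.elim0) else 0 := by
  cases n with
  | zero =>
    rw [if_pos rfl, show Ifin 0 0 = {fun i : Fin 0 => i.elim0} from by
      ext c
      simp [Ifin, Fintype.mem_piFinset, eq_iff_true_of_subsingleton]]
    rw [Finset.sum_singleton]
  | succ n =>
    rw [if_neg (Nat.succ_ne_zero n), show Ifin 0 (n + 1) = ∅ from by
      ext c
      simp [Ifin, Fintype.mem_piFinset]]
    exact Finset.sum_empty

lemma sum_Ifin_succ {M : Type*} [AddCommMonoid M] (r n : ℕ) (F : (Fin (r + 1) → ℕ) → M) :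
    ∑ c ∈ Ifin (r + 1) n, F c = ∑ i ∈ Icc 1 n, ∑ c ∈ Ifin r (n - i), F (Fin.cons i c) := by
  rw [Finset.sum_sigma' (Icc 1 n) (fun i => Ifin r (n - i)) (fun i c => F (Fin.cons i c))]
  refine Finset.sum_nbij' (fun c => ⟨c 0, Fin.tail c⟩) (fun p => Fin.cons p.1 p.2)
    ?_ ?_ ?_ ?_ ?_
  · intro c hc
    rw [Ifin, Finset.mem_filter, Fintype.mem_piFinset] at hc
    obtain ⟨hc1, hc2⟩ := hc
    have h0 := Finset.mem_Icc.mp (hc1 0)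
    have hsum : c 0 + ∑ j : Fin r, Fin.tail c j = n := by
      rw [show (∑ j : Fin r, Fin.tail c j) = ∑ j : Fin r, c j.succ from rfl,
        ← Fin.sum_univ_succ]
      exact hc2
    rw [Finset.mem_sigma]
    constructor
    · exact hc1 0
    · rw [Ifin, Finset.mem_filter, Fintype.mem_piFinset]
      have hj1 : ∀ j : Fin r, 1 ≤ Fin.tail c j := fun j => (Finset.mem_Icc.mp (hc1 j.succ)).1
      have hj2 : ∀ j : Fin r, Fin.tail c j ≤ ∑ i : Fin r, Fin.tail c i := fun j =>
        Finset.single_le_sum (fun i _ => Nat.zero_le _) (Finset.mem_univ j)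
      constructor
      · intro j
        rw [Finset.mem_Icc]
        refine ⟨hj1 j, ?_⟩
        have := hj2 j
        show Fin.tail c j ≤ n - c 0
        omega
      · show ∑ i : Fin r, Fin.tail c i = n - c 0
        omega
  · intro p hp
    rw [Finset.mem_sigma] at hp
    obtain ⟨hp1, hp2⟩ := hp
    rw [Finset.mem_Icc] at hp1
    rw [Ifin, Finset.mem_filter, Fintype.mem_piFinset] at hp2 ⊢
    obtain ⟨hp2, hp3⟩ := hp2
    constructor
    · intro j
      refine Fin.cases ?_ ?_ j
      · simp only [Fin.cons_zero, Finset.mem_Icc]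
        omega
      · intro i
        simp only [Fin.cons_succ]
        have := Finset.mem_Icc.mp (hp2 i)
        rw [Finset.mem_Icc]
        omega
    · simp only [Fin.sum_univ_succ, Fin.cons_zero, Fin.cons_succ]
      omega
  · intro c _
    exact Fin.cons_self_tail c
  · intro p _
    simp only [Fin.cons_zero, Fin.tail_cons]
  · intro c _
    rw [Fin.cons_self_tail]

/-! #### The `PhiM` recursion -/

/-- `G_r^n(x) = Σ_{c ∈ I(r,n)} φ_{c_1} ⋯ φ_{c_r}(x)`. -/
def Gr (r n : ℕ) (x : DOne) : DOne :=
  ∑ c ∈ Ifin r n, ((List.ofFn fun j : Fin r => phi (c j)).foldr (· ∘ ·) id) x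

lemma Gr_zero (n : ℕ) (x : DOne) : Gr 0 n x = if n = 0 then x else 0 := by
  rw [Gr, sum_Ifin_zero]
  split <;> simp

lemma Gr_of_empty {r n : ℕ} (h : n < r) (x : DOne) : Gr r n x = 0 := by
  rw [Gr, Ifin_eq_empty h, Finset.sum_empty]

lemma Gr_succ (r n : ℕ) (x : DOne) :
    Gr (r + 1) n x = ∑ i ∈ Icc 1 n, phi i (Gr r (n - i) x) := by
  rw [Gr, sum_Ifin_succ]
  refine Finset.sum_congr rfl fun i _ => ?_
  rw [Gr, phi_sum]
  refine Finset.sum_congr rfl fun c _ => ?_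
  rw [List.ofFn_succ]
  simp [Fin.cons_zero, Fin.cons_succ]

lemma PhiM_succ_eq (l : ℕ) (x : DOne) :
    PhiM (l + 1) x = ∑ r ∈ Icc 1 (l + 1), (-1 : ℤ) ^ r • Gr r (l + 1) x := rfl

lemma PhiM_zero (x : DOne) : PhiM 0 x = x := rfl

lemma PhiM_rec (l : ℕ) (x : DOne) :
    PhiM (l + 1) x = -∑ i ∈ Icc 1 (l + 1), phi i (PhiM (l + 1 - i) x) := by
  rw [PhiM_succ_eq, sum_Icc_one]
  have h1 : ∀ r ∈ range (l + 1), ((-1 : ℤ)) ^ (r + 1) • Gr (r + 1) (l + 1) x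
      = -∑ i ∈ Icc 1 (l + 1), ((-1 : ℤ)) ^ r • phi i (Gr r (l + 1 - i) x) := by
    intro r _
    rw [Gr_succ, neg_one_pow_smul_succ, Finset.smul_sum]
  rw [Finset.sum_congr rfl h1, Finset.sum_neg_distrib]
  congr 1
  rw [Finset.sum_comm]
  refine Finset.sum_congr rfl fun i hi => ?_
  rw [mem_Icc] at hi
  by_cases hil : i = l + 1
  · subst hil
    rw [Nat.sub_self]
    rw [Finset.sum_eq_single 0 (fun b _ hbne => by
        rw [Gr_of_empty (Nat.pos_of_ne_zero hbne), phi_zero, smul_zero])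
      (fun h0 => absurd (mem_range.mpr (Nat.succ_pos l)) h0)]
    rw [Gr_zero, if_pos rfl, pow_zero, one_smul, PhiM_zero]
  · obtain ⟨m', hm⟩ : ∃ m', l + 1 - i = m' + 1 := ⟨l - i, by omega⟩
    rw [hm, PhiM_succ_eq, phi_sum]
    have hsub : Icc 1 (m' + 1) ⊆ range (l + 1) := by
      intro j hj
      rw [mem_Icc] at hj
      rw [mem_range]
      omega
    have hvan : ∀ r ∈ range (l + 1), r ∉ Icc 1 (m' + 1) →
        ((-1 : ℤ)) ^ r • phi i (Gr r (m' + 1) x) = 0 := by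
      intro r _ hr
      rw [mem_Icc] at hr
      push_neg at hr
      rcases Nat.eq_zero_or_pos r with h0 | h0
      · subst h0
        rw [Gr_zero, if_neg (Nat.succ_ne_zero m'), phi_zero, smul_zero]
      · rw [Gr_of_empty (by have := hr h0; omega), phi_zero, smul_zero]
    have hcg : (∑ r ∈ Icc 1 (m' + 1), phi i (((-1 : ℤ)) ^ r • Gr r (m' + 1) x))
        = ∑ r ∈ Icc 1 (m' + 1), ((-1 : ℤ)) ^ r • phi i (Gr r (m' + 1) x) :=
      Finset.sum_congr rfl fun r _ => by rw [phi_smul]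
    rw [hcg, Finset.sum_subset hsub hvan]

lemma PhiM_pow (a : ℕ) : ∀ l, PhiM l (zO ^ a) = ((-1 : ℤ)) ^ l • BB a l := by
  intro l
  induction l using Nat.strong_induction_on with
  | _ l ihl =>
    match l with
    | 0 => rw [PhiM_zero, BB_zero, pow_zero, one_smul]
    | l + 1 =>
      rw [PhiM_rec]
      have h1 : ∀ i ∈ Icc 1 (l + 1), phi i (PhiM (l + 1 - i) (zO ^ a))
          = ((-1 : ℤ)) ^ (l + 1 - i) • phi i (BB a (l + 1 - i)) := by
        intro i hi
        rw [mem_Icc] at hi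
        rw [ihl (l + 1 - i) (by omega), phi_smul]
      rw [Finset.sum_congr rfl h1, sum_Icc_one]
      have hS := SSd_eq a (l + 1)
      rw [if_neg (Nat.succ_ne_zero l), SSd, Finset.sum_range_succ'] at hS
      rw [neg_eq_iff_add_eq_zero]
      rw [Nat.sub_zero, phi_zero_apply] at hS
      exact hS
end ZAux4
section ZAux5
open Finset

lemma DD_zero : DD 0 = 1 := by rw [DD]

lemma DD_succ (m : ℕ) :
    DD (m + 1) = ∑ k ∈ range (m + 1), xiX ⟨k + 1, Nat.succ_pos k⟩ * DD (m - k) := by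
  rw [DD]

lemma pnat_succ_add_one (k : ℕ) :
    (⟨k + 1, Nat.succ_pos k⟩ : ℕ+) + 1 = (⟨k + 2, Nat.succ_pos _⟩ : ℕ+) := by
  apply PNat.coe_injective
  rfl

lemma rho_DD_zmul (m : ℕ) (y : Dfree) :
    rho (DD m) (zL 1 * y)
      = (zL 1 * rho (DD m) y
          + ∑ k ∈ range m, zL ⟨k + 2, Nat.succ_pos _⟩ * rho (DD (m - 1 - k)) y)
        + ∑ k ∈ range m, xiL ⟨k + 1, Nat.succ_pos k⟩ * rho (DD (m - 1 - k)) (zL 1 * y) := by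
  cases m with
  | zero => rw [DD_zero, rho_one_left, rho_one_left]; simp
  | succ m =>
    rw [DD_succ, rho_sum_left]
    have h1 : ∀ k ∈ range (m + 1), rho ((xiX ⟨k + 1, Nat.succ_pos k⟩) * DD (m - k)) (zL 1 * y)
        = xiL ⟨k + 1, Nat.succ_pos k⟩ * rho (DD (m - k)) (zL 1 * y)
          + zL 1 * rho (xiX ⟨k + 1, Nat.succ_pos k⟩ * DD (m - k)) y
          + zL ⟨k + 2, Nat.succ_pos _⟩ * rho (DD (m - k)) y := by
      intro k _
      erw [rho_xi_z, pnat_succ_add_one]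
    rw [Finset.sum_congr rfl h1, Finset.sum_add_distrib, Finset.sum_add_distrib,
      ← Finset.mul_sum, ← rho_sum_left, ← DD_succ]
    simp only [Nat.add_sub_cancel]
    abel

lemma rho_DD_ximul (m : ℕ) (y : Dfree) :
    rho (DD m) (xiL 1 * y)
      = (xiL 1 * rho (DD m) y
          + ∑ k ∈ range m, xiL ⟨k + 2, Nat.succ_pos _⟩ * rho (DD (m - 1 - k)) y)
        + ∑ k ∈ range m, xiL ⟨k + 1, Nat.succ_pos k⟩ * rho (DD (m - 1 - k)) (xiL 1 * y) := by
  cases m with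
  | zero => rw [DD_zero, rho_one_left, rho_one_left]; simp
  | succ m =>
    rw [DD_succ, rho_sum_left]
    have h1 : ∀ k ∈ range (m + 1), rho ((xiX ⟨k + 1, Nat.succ_pos k⟩) * DD (m - k)) (xiL 1 * y)
        = xiL ⟨k + 1, Nat.succ_pos k⟩ * rho (DD (m - k)) (xiL 1 * y)
          + xiL 1 * rho (xiX ⟨k + 1, Nat.succ_pos k⟩ * DD (m - k)) y
          + xiL ⟨k + 2, Nat.succ_pos _⟩ * rho (DD (m - k)) y := by
      intro k _
      erw [rho_xi_xi, pnat_succ_add_one]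
    rw [Finset.sum_congr rfl h1, Finset.sum_add_distrib, Finset.sum_add_distrib,
      ← Finset.mul_sum, ← rho_sum_left, ← DD_succ]
    simp only [Nat.add_sub_cancel]
    abel

/-! #### Row expansions -/

lemma row00 (m : ℕ) : rho (DD m) (toD1 (BB 0 0))
    = (∑ k ∈ range m, xiL ⟨k + 1, Nat.succ_pos k⟩ * rho (DD (m - 1 - k)) (toD1 (BB 0 0)))
      + (if m = 0 then 1 else 0) := by
  cases m with
  | zero =>
    rw [DD_zero, BB_zero_zero, toD1_one, rho_one_left, if_pos rfl]
    simp
  | succ m =>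
    rw [if_neg (Nat.succ_ne_zero m), add_zero, BB_zero_zero, toD1_one, DD_succ, rho_sum_left]
    simp only [Nat.add_sub_cancel]
    exact Finset.sum_congr rfl fun k _ => rho_xi_one _ _

lemma row0 (l m : ℕ) : rho (DD m) (toD1 (BB 0 (l + 1)))
    = xiL 1 * rho (DD m) (toD1 (BB 0 l))
      + ∑ k ∈ range m, xiL ⟨k + 1, Nat.succ_pos k⟩ * rho (DD (m - 1 - k)) (toD1 (BB 0 (l + 1)))
      + ∑ k ∈ range m, xiL ⟨k + 2, Nat.succ_pos _⟩ * rho (DD (m - 1 - k)) (toD1 (BB 0 l)) := by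
  conv_lhs => rw [BB_zero_succ, toD1_mul, toD1_xiO]
  rw [rho_DD_ximul]
  have h1 : ∀ k ∈ range m, xiL ⟨k + 1, Nat.succ_pos k⟩ * rho (DD (m - 1 - k)) (xiL 1 * toD1 (BB 0 l))
      = xiL ⟨k + 1, Nat.succ_pos k⟩ * rho (DD (m - 1 - k)) (toD1 (BB 0 (l + 1))) := by
    intro k _
    rw [← toD1_xiO, ← toD1_mul, ← BB_zero_succ]
  rw [Finset.sum_congr rfl h1]
  abel

lemma row1 (b m : ℕ) : rho (DD m) (toD1 (BB (b + 1) 0))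
    = (zL 1 * rho (DD m) (toD1 (BB b 0))
        + ∑ k ∈ range m, zL ⟨k + 2, Nat.succ_pos _⟩ * rho (DD (m - 1 - k)) (toD1 (BB b 0)))
      + ∑ k ∈ range m, xiL ⟨k + 1, Nat.succ_pos k⟩ * rho (DD (m - 1 - k)) (toD1 (BB (b + 1) 0)) := by
  conv_lhs => rw [BB_succ_zero, toD1_mul, toD1_zO]
  rw [rho_DD_zmul]
  have h1 : ∀ k ∈ range m, xiL ⟨k + 1, Nat.succ_pos k⟩ * rho (DD (m - 1 - k)) (zL 1 * toD1 (BB b 0))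
      = xiL ⟨k + 1, Nat.succ_pos k⟩ * rho (DD (m - 1 - k)) (toD1 (BB (b + 1) 0)) := by
    intro k _
    rw [← toD1_zO, ← toD1_mul, ← BB_succ_zero]
  rw [Finset.sum_congr rfl h1]

lemma row2 (b l m : ℕ) : rho (DD m) (toD1 (BB (b + 1) (l + 1)))
    = (zL 1 * rho (DD m) (toD1 (BB b (l + 1)))
        + ∑ k ∈ range m, zL ⟨k + 2, Nat.succ_pos _⟩ * rho (DD (m - 1 - k)) (toD1 (BB b (l + 1))))
      + (xiL 1 * rho (DD m) (toD1 (BB (b + 1) l))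
        + ∑ k ∈ range m, xiL ⟨k + 1, Nat.succ_pos k⟩ * rho (DD (m - 1 - k)) (toD1 (BB (b + 1) (l + 1)))
        + ∑ k ∈ range m, xiL ⟨k + 2, Nat.succ_pos _⟩ * rho (DD (m - 1 - k)) (toD1 (BB (b + 1) l))) := by
  conv_lhs => rw [BB_succ_succ, toD1_add, toD1_mul, toD1_mul, toD1_zO, toD1_xiO]
  rw [rho_add_right, rho_DD_zmul, rho_DD_ximul]
  have h1 : ∀ k ∈ range m, xiL ⟨k + 1, Nat.succ_pos k⟩ * rho (DD (m - 1 - k)) (toD1 (BB (b + 1) (l + 1)))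
      = xiL ⟨k + 1, Nat.succ_pos k⟩ * rho (DD (m - 1 - k)) (zL 1 * toD1 (BB b (l + 1)))
        + xiL ⟨k + 1, Nat.succ_pos k⟩ * rho (DD (m - 1 - k)) (xiL 1 * toD1 (BB (b + 1) l)) := by
    intro k _
    rw [← mul_add, ← rho_add_right, ← toD1_zO, ← toD1_xiO, ← toD1_mul, ← toD1_mul, ← toD1_add,
      ← BB_succ_succ]
  rw [Finset.sum_congr rfl h1, Finset.sum_add_distrib]
  abel

end ZAux5
section ZAux6
open Finset

/-- `M_F(j) = Σ_{l=0}^{j} (-1)^l F(j-l, l)`. -/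
def Msum (F : ℕ → ℕ → Dfree) (j : ℕ) : Dfree :=
  ∑ l ∈ range (j + 1), ((-1 : ℤ)) ^ l • F (j - l) l

lemma Msum_peel (F : ℕ → ℕ → Dfree) (j : ℕ) :
    Msum F j = (∑ l ∈ range j, ((-1 : ℤ)) ^ (l + 1) • F (j - 1 - l) (l + 1)) + F j 0 := by
  rw [Msum, Finset.sum_range_succ']
  congr 1
  · refine Finset.sum_congr rfl fun l hl => ?_
    rw [mem_range] at hl
    rw [show j - (l + 1) = j - 1 - l from by omega]
  · rw [Nat.sub_zero, pow_zero, one_smul]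

lemma Msum_zero_eq (F : ℕ → ℕ → Dfree) : Msum F 0 = F 0 0 := by
  rw [Msum]
  simp

lemma Msum_peel' (F : ℕ → ℕ → Dfree) (j : ℕ) :
    (∑ l ∈ range (j + 1), ((-1 : ℤ)) ^ (l + 1) • F (j - l) (l + 1))
      = Msum F (j + 1) - F (j + 1) 0 := by
  rw [Msum_peel F (j + 1)]
  simp only [Nat.add_sub_cancel]
  abel

lemma xi_cancel (s : ℕ) (F : ℕ → ℕ → Dfree) :
    ((∑ k ∈ range s, xiL ⟨k + 1, Nat.succ_pos k⟩ * F (s - 1 - k) 0)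
      + ∑ l ∈ range s, ((-1 : ℤ)) ^ (l + 1) •
          (xiL 1 * F (s - 1 - l) l
            + ∑ k ∈ range (s - 1 - l), xiL ⟨k + 1, Nat.succ_pos k⟩ * F (s - 1 - l - 1 - k) (l + 1)
            + ∑ k ∈ range (s - 1 - l), xiL ⟨k + 2, Nat.succ_pos _⟩ * F (s - 1 - l - 1 - k) l))
      = 0 := by
  cases s with
  | zero => simp
  | succ t =>
    simp only [Nat.add_sub_cancel]
    have hsplit : ∀ l ∈ range (t + 1), ((-1 : ℤ)) ^ (l + 1) •
        (xiL 1 * F (t - l) l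
          + ∑ k ∈ range (t - l), xiL ⟨k + 1, Nat.succ_pos k⟩ * F (t - l - 1 - k) (l + 1)
          + ∑ k ∈ range (t - l), xiL ⟨k + 2, Nat.succ_pos _⟩ * F (t - l - 1 - k) l)
        = ((-1 : ℤ)) ^ (l + 1) • (xiL 1 * F (t - l) l)
          + ((-1 : ℤ)) ^ (l + 1) • (∑ k ∈ range (t - l), xiL ⟨k + 1, Nat.succ_pos k⟩ * F (t - l - 1 - k) (l + 1))
          + ((-1 : ℤ)) ^ (l + 1) • (∑ k ∈ range (t - l), xiL ⟨k + 2, Nat.succ_pos _⟩ * F (t - l - 1 - k) l) := by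
      intro l _
      rw [smul_add, smul_add]
    rw [Finset.sum_congr rfl hsplit, Finset.sum_add_distrib, Finset.sum_add_distrib]
    have hB1 : ∑ l ∈ range (t + 1), ((-1 : ℤ)) ^ (l + 1) • (xiL 1 * F (t - l) l)
        = -(xiL 1 * Msum F t) := by
      have h : ∀ l ∈ range (t + 1), ((-1 : ℤ)) ^ (l + 1) • (xiL 1 * F (t - l) l)
          = -(xiL 1 * (((-1 : ℤ)) ^ l • F (t - l) l)) := by
        intro l _
        rw [neg_one_pow_smul_succ, mul_smul_comm]
      rw [Finset.sum_congr rfl h, Finset.sum_neg_distrib, ← Finset.mul_sum, ← Msum]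
    have hB2 : ∑ l ∈ range (t + 1), ((-1 : ℤ)) ^ (l + 1) •
          (∑ k ∈ range (t - l), xiL ⟨k + 1, Nat.succ_pos k⟩ * F (t - l - 1 - k) (l + 1))
        = (∑ k ∈ range (t + 1), xiL ⟨k + 1, Nat.succ_pos k⟩ * Msum F (t - k))
          - (∑ k ∈ range (t + 1), xiL ⟨k + 1, Nat.succ_pos k⟩ * F (t - k) 0) := by
      have h : ∀ l ∈ range (t + 1), ((-1 : ℤ)) ^ (l + 1) •
            (∑ k ∈ range (t - l), xiL ⟨k + 1, Nat.succ_pos k⟩ * F (t - l - 1 - k) (l + 1))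
          = ∑ k ∈ range (t - l), ((-1 : ℤ)) ^ (l + 1) •
              (xiL ⟨k + 1, Nat.succ_pos k⟩ * F (t - l - 1 - k) (l + 1)) := by
        intro l _
        rw [Finset.smul_sum]
      rw [Finset.sum_congr rfl h, sum_tri1 t]
      have h2 : ∀ k ∈ range t, (∑ l ∈ range (t - k), ((-1 : ℤ)) ^ (l + 1) •
            (xiL ⟨k + 1, Nat.succ_pos k⟩ * F (t - l - 1 - k) (l + 1)))
          = xiL ⟨k + 1, Nat.succ_pos k⟩ * Msum F (t - k)
            - xiL ⟨k + 1, Nat.succ_pos k⟩ * F (t - k) 0 := by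
        intro k hk
        rw [mem_range] at hk
        have h3 : ∀ l ∈ range (t - k), ((-1 : ℤ)) ^ (l + 1) •
              (xiL ⟨k + 1, Nat.succ_pos k⟩ * F (t - l - 1 - k) (l + 1))
            = xiL ⟨k + 1, Nat.succ_pos k⟩ * (((-1 : ℤ)) ^ (l + 1) • F (t - 1 - k - l) (l + 1)) := by
          intro l hl
          rw [mem_range] at hl
          rw [show t - l - 1 - k = t - 1 - k - l from by omega, mul_smul_comm]
        rw [Finset.sum_congr rfl h3, ← Finset.mul_sum,
          show t - k = (t - 1 - k) + 1 from by omega, Msum_peel', mul_sub]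
      rw [Finset.sum_congr rfl h2, Finset.sum_sub_distrib]
      have hMt : Msum F (t - t) = F (t - t) 0 := by
        rw [Nat.sub_self, Msum_zero_eq]
      rw [Finset.sum_range_succ
        (fun k => xiL ⟨k + 1, Nat.succ_pos k⟩ * Msum F (t - k)) t]
      rw [Finset.sum_range_succ
        (fun k => xiL ⟨k + 1, Nat.succ_pos k⟩ * F (t - k) 0) t]
      rw [hMt]
      abel
    have hB3 : ∑ l ∈ range (t + 1), ((-1 : ℤ)) ^ (l + 1) •
          (∑ k ∈ range (t - l), xiL ⟨k + 2, Nat.succ_pos _⟩ * F (t - l - 1 - k) l)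
        = -(∑ k ∈ range t, xiL ⟨k + 2, Nat.succ_pos _⟩ * Msum F (t - 1 - k)) := by
      have h : ∀ l ∈ range (t + 1), ((-1 : ℤ)) ^ (l + 1) •
            (∑ k ∈ range (t - l), xiL ⟨k + 2, Nat.succ_pos _⟩ * F (t - l - 1 - k) l)
          = ∑ k ∈ range (t - l), -(((-1 : ℤ)) ^ l •
              (xiL ⟨k + 2, Nat.succ_pos _⟩ * F (t - l - 1 - k) l)) := by
        intro l _
        rw [neg_one_pow_smul_succ, Finset.smul_sum, Finset.sum_neg_distrib]
      rw [Finset.sum_congr rfl h, sum_tri1 t]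
      have h2 : ∀ k ∈ range t, (∑ l ∈ range (t - k), -(((-1 : ℤ)) ^ l •
            (xiL ⟨k + 2, Nat.succ_pos _⟩ * F (t - l - 1 - k) l)))
          = -(xiL ⟨k + 2, Nat.succ_pos _⟩ * Msum F (t - 1 - k)) := by
        intro k hk
        rw [mem_range] at hk
        have h3 : ∀ l ∈ range (t - k), -(((-1 : ℤ)) ^ l •
              (xiL ⟨k + 2, Nat.succ_pos _⟩ * F (t - l - 1 - k) l))
            = -(xiL ⟨k + 2, Nat.succ_pos _⟩ * (((-1 : ℤ)) ^ l • F (t - 1 - k - l) l)) := by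
          intro l hl
          rw [mem_range] at hl
          rw [show t - l - 1 - k = t - 1 - k - l from by omega, mul_smul_comm]
        rw [Finset.sum_congr rfl h3, Finset.sum_neg_distrib, ← Finset.mul_sum,
          show t - k = (t - 1 - k) + 1 from by omega, ← Msum]
      rw [Finset.sum_congr rfl h2, Finset.sum_neg_distrib]
    rw [hB1, hB2, hB3]
    have hA : ∑ k ∈ range (t + 1), xiL ⟨k + 1, Nat.succ_pos k⟩ * Msum F (t - k)
        = xiL 1 * Msum F t + ∑ k ∈ range t, xiL ⟨k + 2, Nat.succ_pos _⟩ * Msum F (t - 1 - k) := by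
      rw [Finset.sum_range_succ', add_comm]
      congr 1
      · refine Finset.sum_congr rfl fun k hk => ?_
        rw [mem_range] at hk
        rw [show t - (k + 1) = t - 1 - k from by omega]
    rw [hA]
    abel

lemma z_assemble (s : ℕ) (F : ℕ → ℕ → Dfree) :
    ((zL 1 * F s 0 + ∑ k ∈ range s, zL ⟨k + 2, Nat.succ_pos _⟩ * F (s - 1 - k) 0)
      + ∑ l ∈ range s, ((-1 : ℤ)) ^ (l + 1) •
          (zL 1 * F (s - 1 - l) (l + 1)
            + ∑ k ∈ range (s - 1 - l), zL ⟨k + 2, Nat.succ_pos _⟩ * F (s - 1 - l - 1 - k) (l + 1)))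
    = ∑ k ∈ range (s + 1), zL ⟨k + 1, Nat.succ_pos k⟩ * Msum F (s - k) := by
  have hsplit : ∀ l ∈ range s, ((-1 : ℤ)) ^ (l + 1) •
      (zL 1 * F (s - 1 - l) (l + 1)
        + ∑ k ∈ range (s - 1 - l), zL ⟨k + 2, Nat.succ_pos _⟩ * F (s - 1 - l - 1 - k) (l + 1))
      = ((-1 : ℤ)) ^ (l + 1) • (zL 1 * F (s - 1 - l) (l + 1))
        + ((-1 : ℤ)) ^ (l + 1) •
            (∑ k ∈ range (s - 1 - l), zL ⟨k + 2, Nat.succ_pos _⟩ * F (s - 1 - l - 1 - k) (l + 1)) := by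
    intro l _
    rw [smul_add]
  rw [Finset.sum_congr rfl hsplit, Finset.sum_add_distrib]
  have hZ1 : ∑ l ∈ range s, ((-1 : ℤ)) ^ (l + 1) • (zL 1 * F (s - 1 - l) (l + 1))
      = zL 1 * Msum F s - zL 1 * F s 0 := by
    have h : ∀ l ∈ range s, ((-1 : ℤ)) ^ (l + 1) • (zL 1 * F (s - 1 - l) (l + 1))
        = zL 1 * (((-1 : ℤ)) ^ (l + 1) • F (s - 1 - l) (l + 1)) := by
      intro l _
      rw [mul_smul_comm]
    rw [Finset.sum_congr rfl h, ← Finset.mul_sum, Msum_peel F s]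
    rw [mul_add]
    abel
  have hZ2 : ∑ l ∈ range s, ((-1 : ℤ)) ^ (l + 1) •
        (∑ k ∈ range (s - 1 - l), zL ⟨k + 2, Nat.succ_pos _⟩ * F (s - 1 - l - 1 - k) (l + 1))
      = (∑ k ∈ range s, zL ⟨k + 2, Nat.succ_pos _⟩ * Msum F (s - 1 - k))
        - (∑ k ∈ range s, zL ⟨k + 2, Nat.succ_pos _⟩ * F (s - 1 - k) 0) := by
    have h : ∀ l ∈ range s, ((-1 : ℤ)) ^ (l + 1) •
        (∑ k ∈ range (s - 1 - l), zL ⟨k + 2, Nat.succ_pos _⟩ * F (s - 1 - l - 1 - k) (l + 1))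
        = ∑ k ∈ range (s - 1 - l), ((-1 : ℤ)) ^ (l + 1) •
            (zL ⟨k + 2, Nat.succ_pos _⟩ * F (s - 1 - l - 1 - k) (l + 1)) := by
      intro l _
      rw [Finset.smul_sum]
    rw [Finset.sum_congr rfl h, sum_tri2 s]
    have h2 : ∀ k ∈ range (s - 1), (∑ l ∈ range (s - 1 - k), ((-1 : ℤ)) ^ (l + 1) •
          (zL ⟨k + 2, Nat.succ_pos _⟩ * F (s - 1 - l - 1 - k) (l + 1)))
        = zL ⟨k + 2, Nat.succ_pos _⟩ * Msum F (s - 1 - k)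
          - zL ⟨k + 2, Nat.succ_pos _⟩ * F (s - 1 - k) 0 := by
      intro k hk
      rw [mem_range] at hk
      have h3 : ∀ l ∈ range (s - 1 - k), ((-1 : ℤ)) ^ (l + 1) •
            (zL ⟨k + 2, Nat.succ_pos _⟩ * F (s - 1 - l - 1 - k) (l + 1))
          = zL ⟨k + 2, Nat.succ_pos _⟩ * (((-1 : ℤ)) ^ (l + 1) • F (s - 1 - k - 1 - l) (l + 1)) := by
        intro l hl
        rw [mem_range] at hl
        rw [show s - 1 - l - 1 - k = s - 1 - k - 1 - l from by omega, mul_smul_comm]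
      rw [Finset.sum_congr rfl h3, ← Finset.mul_sum, Msum_peel F (s - 1 - k), mul_add]
      abel
    rw [Finset.sum_congr rfl h2, Finset.sum_sub_distrib]
    have hext : ∀ (G : ℕ → ℕ → Dfree), (∑ k ∈ range (s - 1),
          (zL ⟨k + 2, Nat.succ_pos _⟩ * Msum G (s - 1 - k)
            - zL ⟨k + 2, Nat.succ_pos _⟩ * G (s - 1 - k) 0))
        = ∑ k ∈ range s,
          (zL ⟨k + 2, Nat.succ_pos _⟩ * Msum G (s - 1 - k)
            - zL ⟨k + 2, Nat.succ_pos _⟩ * G (s - 1 - k) 0) := by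
      intro G
      refine Finset.sum_subset (fun k hk => by
        rw [mem_range] at hk ⊢
        omega) ?_
      intro k hk hk'
      rw [mem_range] at hk hk'
      rw [show s - 1 - k = 0 from by omega, Msum_zero_eq, sub_self]
    rw [← Finset.sum_sub_distrib, hext, Finset.sum_sub_distrib]
  rw [hZ1, hZ2]
  have hR : ∑ k ∈ range (s + 1), zL ⟨k + 1, Nat.succ_pos k⟩ * Msum F (s - k)
      = zL 1 * Msum F s + ∑ k ∈ range s, zL ⟨k + 2, Nat.succ_pos _⟩ * Msum F (s - 1 - k) := by
    rw [Finset.sum_range_succ', add_comm]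
    congr 1
    · refine Finset.sum_congr rfl fun k hk => ?_
      rw [mem_range] at hk
      rw [show s - (k + 1) = s - 1 - k from by omega]
  rw [hR]
  abel

end ZAux6
section ZAux7
open Finset

lemma zOf_succ (k : ℕ) : zOf (k + 1) = zL ⟨k + 1, Nat.succ_pos k⟩ := by
  simp [zOf]

lemma LL_zero (s : ℕ) :
    Msum (fun j l => rho (DD j) (toD1 (BB 0 l))) s = if s = 0 then 1 else 0 := by
  cases s with
  | zero =>
    rw [if_pos rfl, Msum_zero_eq]
    show rho (DD 0) (toD1 (BB 0 0)) = 1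
    rw [DD_zero, BB_zero_zero, toD1_one, rho_one_left]
  | succ t =>
    rw [if_neg (Nat.succ_ne_zero t), Msum_peel]
    show (∑ l ∈ range (t + 1), ((-1 : ℤ)) ^ (l + 1) • rho (DD (t + 1 - 1 - l)) (toD1 (BB 0 (l + 1))))
        + rho (DD (t + 1)) (toD1 (BB 0 0)) = 0
    simp only [Nat.add_sub_cancel]
    rw [row00 (t + 1), if_neg (Nat.succ_ne_zero t), add_zero]
    simp only [Nat.add_sub_cancel]
    have hrow : ∀ l ∈ range (t + 1), ((-1 : ℤ)) ^ (l + 1) • rho (DD (t - l)) (toD1 (BB 0 (l + 1)))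
        = ((-1 : ℤ)) ^ (l + 1) • (xiL 1 * rho (DD (t - l)) (toD1 (BB 0 l))
            + ∑ k ∈ range (t - l), xiL ⟨k + 1, Nat.succ_pos k⟩ * rho (DD (t - l - 1 - k)) (toD1 (BB 0 (l + 1)))
            + ∑ k ∈ range (t - l), xiL ⟨k + 2, Nat.succ_pos _⟩ * rho (DD (t - l - 1 - k)) (toD1 (BB 0 l))) := by
      intro l _
      rw [row0]
    rw [Finset.sum_congr rfl hrow]
    have hx : ((∑ k ∈ range (t + 1), xiL ⟨k + 1, Nat.succ_pos k⟩ * rho (DD (t - k)) (toD1 (BB 0 0)))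
        + ∑ l ∈ range (t + 1), ((-1 : ℤ)) ^ (l + 1) •
            (xiL 1 * rho (DD (t - l)) (toD1 (BB 0 l))
              + ∑ k ∈ range (t - l), xiL ⟨k + 1, Nat.succ_pos k⟩ * rho (DD (t - l - 1 - k)) (toD1 (BB 0 (l + 1)))
              + ∑ k ∈ range (t - l), xiL ⟨k + 2, Nat.succ_pos _⟩ * rho (DD (t - l - 1 - k)) (toD1 (BB 0 l))))
        = 0 := xi_cancel (t + 1) (fun j l => rho (DD j) (toD1 (BB 0 l)))
    rw [add_comm] at hx
    exact hx

lemma LL_succ (b s : ℕ) :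
    Msum (fun j l => rho (DD j) (toD1 (BB (b + 1) l))) s
      = ∑ k ∈ range (s + 1), zL ⟨k + 1, Nat.succ_pos k⟩
          * Msum (fun j l => rho (DD j) (toD1 (BB b l))) (s - k) := by
  rw [Msum_peel]
  show (∑ l ∈ range s, ((-1 : ℤ)) ^ (l + 1) • rho (DD (s - 1 - l)) (toD1 (BB (b + 1) (l + 1))))
      + rho (DD s) (toD1 (BB (b + 1) 0)) = _
  rw [row1 b s]
  have hrow : ∀ l ∈ range s, ((-1 : ℤ)) ^ (l + 1) • rho (DD (s - 1 - l)) (toD1 (BB (b + 1) (l + 1)))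
      = ((-1 : ℤ)) ^ (l + 1) • (zL 1 * rho (DD (s - 1 - l)) (toD1 (BB b (l + 1)))
          + ∑ k ∈ range (s - 1 - l), zL ⟨k + 2, Nat.succ_pos _⟩ * rho (DD (s - 1 - l - 1 - k)) (toD1 (BB b (l + 1))))
        + ((-1 : ℤ)) ^ (l + 1) • (xiL 1 * rho (DD (s - 1 - l)) (toD1 (BB (b + 1) l))
          + ∑ k ∈ range (s - 1 - l), xiL ⟨k + 1, Nat.succ_pos k⟩ * rho (DD (s - 1 - l - 1 - k)) (toD1 (BB (b + 1) (l + 1)))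
          + ∑ k ∈ range (s - 1 - l), xiL ⟨k + 2, Nat.succ_pos _⟩ * rho (DD (s - 1 - l - 1 - k)) (toD1 (BB (b + 1) l))) := by
    intro l _
    rw [row2, smul_add]
  rw [Finset.sum_congr rfl hrow, Finset.sum_add_distrib]
  have hz : ((zL 1 * rho (DD s) (toD1 (BB b 0))
        + ∑ k ∈ range s, zL ⟨k + 2, Nat.succ_pos _⟩ * rho (DD (s - 1 - k)) (toD1 (BB b 0)))
      + ∑ l ∈ range s, ((-1 : ℤ)) ^ (l + 1) •
          (zL 1 * rho (DD (s - 1 - l)) (toD1 (BB b (l + 1)))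
            + ∑ k ∈ range (s - 1 - l), zL ⟨k + 2, Nat.succ_pos _⟩ * rho (DD (s - 1 - l - 1 - k)) (toD1 (BB b (l + 1)))))
      = ∑ k ∈ range (s + 1), zL ⟨k + 1, Nat.succ_pos k⟩
          * Msum (fun j l => rho (DD j) (toD1 (BB b l))) (s - k) :=
    z_assemble s (fun j l => rho (DD j) (toD1 (BB b l)))
  have hx : ((∑ k ∈ range s, xiL ⟨k + 1, Nat.succ_pos k⟩ * rho (DD (s - 1 - k)) (toD1 (BB (b + 1) 0)))
      + ∑ l ∈ range s, ((-1 : ℤ)) ^ (l + 1) •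
          (xiL 1 * rho (DD (s - 1 - l)) (toD1 (BB (b + 1) l))
            + ∑ k ∈ range (s - 1 - l), xiL ⟨k + 1, Nat.succ_pos k⟩ * rho (DD (s - 1 - l - 1 - k)) (toD1 (BB (b + 1) (l + 1)))
            + ∑ k ∈ range (s - 1 - l), xiL ⟨k + 2, Nat.succ_pos _⟩ * rho (DD (s - 1 - l - 1 - k)) (toD1 (BB (b + 1) l))))
      = 0 := xi_cancel s (fun j l => rho (DD j) (toD1 (BB (b + 1) l)))
  rw [← hz, ← sub_eq_zero, ← hx]
  abel

lemma Msum_TT (a : ℕ) : ∀ s, Msum (fun j l => rho (DD j) (toD1 (BB a l))) s = TT s a := by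
  induction a with
  | zero =>
    intro s
    rw [LL_zero, TT]
  | succ b ih =>
    intro s
    rw [LL_succ, TT]
    refine Finset.sum_congr rfl fun k _ => ?_
    rw [ih (s - k), zOf_succ]

lemma Zmap_Msum (s a : ℕ) :
    Zmap s (zO ^ a) = Msum (fun j l => rho (DD j) (toD1 (BB a l))) s := by
  rw [Zmap, Msum]
  refine Finset.sum_congr rfl fun l hl => ?_
  rw [dmap_xiX1_pow, PhiM_pow, toD1_smul, rho_smul_right]

lemma TT_eq (a : ℕ) : ∀ s, TT s a
    = ∑ γ ∈ Ifin a (s + a), (List.ofFn fun j : Fin a => zOf (γ j)).prod := by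
  induction a with
  | zero =>
    intro s
    rw [TT, sum_Ifin_zero]
    rcases Nat.eq_zero_or_pos s with h | h
    · subst h
      simp
    · rw [if_neg (by omega), if_neg (by omega)]
  | succ b ih =>
    intro s
    rw [TT]
    conv_rhs => rw [sum_Ifin_succ]
    have hinn : ∀ i ∈ Icc 1 (s + (b + 1)),
        (∑ c ∈ Ifin b (s + (b + 1) - i), (List.ofFn fun j : Fin (b + 1) => zOf ((Fin.cons i c : Fin (b + 1) → ℕ) j)).prod)
        = zOf i * ∑ c ∈ Ifin b (s + (b + 1) - i), (List.ofFn fun j : Fin b => zOf (c j)).prod := by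
      intro i _
      rw [Finset.mul_sum]
      refine Finset.sum_congr rfl fun c _ => ?_
      rw [List.ofFn_succ]
      simp [Fin.cons_zero, Fin.cons_succ]
    rw [Finset.sum_congr rfl hinn]
    have hsub : Icc 1 (s + 1) ⊆ Icc 1 (s + (b + 1)) := by
      intro i hi
      rw [mem_Icc] at hi ⊢
      omega
    have hvan : ∀ i ∈ Icc 1 (s + (b + 1)), i ∉ Icc 1 (s + 1) →
        zOf i * (∑ c ∈ Ifin b (s + (b + 1) - i), (List.ofFn fun j : Fin b => zOf (c j)).prod) = 0 := by
      intro i hi hi'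
      rw [mem_Icc] at hi hi'
      push_neg at hi'
      rw [Ifin_eq_empty (show s + (b + 1) - i < b from by omega), Finset.sum_empty, mul_zero]
    rw [← Finset.sum_subset hsub hvan, sum_Icc_one]
    refine Finset.sum_congr rfl fun k hk => ?_
    rw [mem_range] at hk
    rw [ih (s - k), show s + (b + 1) - (k + 1) = (s - k) + b from by omega]

end ZAux7
/-- For all integers `s ≥ 0` and `a ≥ 1`,
`Z_s(z_1^a) = Σ_{γ ∈ I(a,s+a)} z_{γ_1} ⋯ z_{γ_a}`. -/
theorem Z_z_pow (s a : ℕ) (ha : 1 ≤ a) :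
    Zmap s (zO ^ a) =
      ∑ γ ∈ Ifin a (s + a), (List.ofFn fun j : Fin a => zOf (γ j)).prod := by
  rw [Zmap_Msum, Msum_TT, TT_eq]

end
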